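/- Let 𝔤 be a finite-dimensional real Lie algebra with trivial centre such that the ideal 𝔤^∞ := ⋂_{j≥1} 𝔤^j is abelian. Then 𝔤^∞ is a maximal abelian subalgebra of 𝔤; that is, every abelian Lie subalgebra 𝔞 ⊆ 𝔤 with 𝔤^∞ ⊆ 𝔞 satisfies 𝔞 = 𝔤^∞. -/

import Mathlib

open LieModule

/-- Centralizer-of-`𝔤^∞` lemma: if the centre is trivial and `𝔤^∞` is abelian then every element
centralizing `𝔤^∞` lies in `𝔤^∞`. -/
theorem aux_central (L : Type*) [LieRing L] [LieAlgebra ℝ L] [Module.Finite ℝ L]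
    (hcenter : LieAlgebra.center ℝ L = ⊥)
    (habelian : ∀ x ∈ (⨅ k, LieModule.lowerCentralSeries ℝ L L k),
      ∀ y ∈ (⨅ k, LieModule.lowerCentralSeries ℝ L L k), ⁅x, y⁆ = 0)
    (x : L) (hx : ∀ m ∈ (⨅ k, LieModule.lowerCentralSeries ℝ L L k), ⁅x, m⁆ = 0) :
    x ∈ (⨅ k, LieModule.lowerCentralSeries ℝ L L k) := by
  set n : LieIdeal ℝ L := ⨅ k, LieModule.lowerCentralSeries ℝ L L k with hn
  haveI : IsNoetherian ℝ L := inferInstance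
  haveI : IsArtinian ℝ L := inferInstance
  -- stabilization
  obtain ⟨N, hN⟩ : ∃ N, LieModule.lowerCentralSeries ℝ L L N = n := by
    have wf := LieSubmodule.wellFoundedLT_of_isArtinian ℝ L L
    obtain ⟨_, ⟨N, rfl⟩, hmin⟩ := wf.wf.has_min
      (Set.range (LieModule.lowerCentralSeries ℝ L L)) (Set.range_nonempty _)
    refine ⟨N, le_antisymm (le_iInf fun k => ?_) (iInf_le _ N)⟩
    rcases le_total k N with h | h
    · exact antitone_lowerCentralSeries ℝ L L h
    · have h1 : LieModule.lowerCentralSeries ℝ L L k ≤ LieModule.lowerCentralSeries ℝ L L N :=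
        antitone_lowerCentralSeries ℝ L L h
      have h2 := hmin _ ⟨k, rfl⟩
      by_contra hlt
      exact h2 (lt_of_le_of_ne h1 (fun he => hlt (he ▸ le_rfl)))
  have hN1 : LieModule.lowerCentralSeries ℝ L L (N + 1) = n :=
    le_antisymm (hN ▸ antitone_lowerCentralSeries ℝ L L (Nat.le_succ N)) (iInf_le _ _)
  have hlie : ⁅(⊤ : LieIdeal ℝ L), n⁆ = n := by
    conv_lhs => rw [← hN]
    rw [← LieModule.lowerCentralSeries_succ, hN1]
  -- the centralizer of n
  let C : LieIdeal ℝ L :=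
    { carrier := {y : L | ∀ m ∈ n, ⁅y, m⁆ = 0}
      add_mem' := fun {a b} ha hb m hm => by rw [add_lie, ha m hm, hb m hm, add_zero]
      zero_mem' := fun m _ => zero_lie m
      smul_mem' := fun t a ha m hm => by rw [smul_lie, ha m hm, smul_zero]
      lie_mem := fun {z y} hy m hm => by
        rw [lie_lie, hy m hm, lie_zero, zero_sub, hy ⁅z, m⁆ (n.lie_mem hm), neg_zero] }
  have hnC : ∀ m ∈ n, m ∈ C := fun m hm m' hm' => habelian m hm m' hm'
  have hxC : x ∈ C := hx
  -- it suffices to show C ≤ n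
  by_contra hcon
  -- the quotient is nilpotent
  haveI hQnil : LieRing.IsNilpotent (L ⧸ n) := by
    have h1 : LieModule.IsNilpotent L (L ⧸ n) :=
      (LieModule.isNilpotent_quotient_iff ℝ L L n).mpr ⟨N, hN.le⟩
    obtain ⟨k, hk⟩ := (LieModule.isNilpotent_iff ℝ L (L ⧸ n)).mp h1
    refine (LieModule.isNilpotent_iff ℝ (L ⧸ n) (L ⧸ n)).mpr ⟨k, ?_⟩
    rw [← LieSubmodule.toSubmodule_inj, ← coe_lowerCentralSeries_ideal_quot_eq, hk]
    simp
  -- n acts trivially on C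
  have hIC : ∀ y ∈ n, ∀ c : C, ⁅y, c⁆ = (0 : C) := by
    intro y hy c
    apply Subtype.ext
    show ⁅y, (c : L)⁆ = 0
    rw [← lie_skew, c.2 y hy, neg_zero]
  -- C is a module over the (nilpotent) quotient
  letI := LieRing.ofAssociativeRing (A := Module.End ℝ C)
  let f : (L ⧸ n) →ₗ⁅ℝ⁆ Module.End ℝ C :=
    { Submodule.liftQ n.toSubmodule (LieModule.toEnd ℝ L C).toLinearMap
        (fun y hy => by
          simp only [LinearMap.mem_ker]
          ext c
          exact congrArg Subtype.val (hIC y hy c)) with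
      map_lie' := by
        rintro ⟨a⟩ ⟨b⟩
        exact (LieModule.toEnd ℝ L C).map_lie a b }
  letI instQ : LieRingModule (L ⧸ n) C := LieRingModule.compLieHom _ f
  letI instQM : LieModule ℝ (L ⧸ n) C := LieModule.compLieHom _ f
  have hbr : ∀ (y : L) (c : C),
      ⁅(LieSubmodule.Quotient.mk (N := n) y : L ⧸ n), c⁆ = ⁅y, c⁆ := fun y c => rfl
  have hsurj : ∀ q : L ⧸ n, ∃ y : L, (LieSubmodule.Quotient.mk (N := n) y : L ⧸ n) = q :=
    fun q => Quotient.exists_rep q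
  -- the copy of n inside C
  let nhat : LieSubmodule ℝ (L ⧸ n) C :=
    { carrier := {c : C | (c : L) ∈ n}
      add_mem' := fun {a b} ha hb => n.add_mem ha hb
      zero_mem' := n.zero_mem
      smul_mem' := fun t a ha => n.smul_mem t ha
      lie_mem := fun {q c} hc => by
        obtain ⟨y, rfl⟩ := hsurj q
        show ((⁅(LieSubmodule.Quotient.mk (N := n) y : L ⧸ n), c⁆ : C) : L) ∈ n
        rw [hbr]
        exact n.lie_mem hc }
  -- first bridge: lcs of C over the quotient sits inside lcs of L
  have hA : ∀ k, ∀ c : C, c ∈ LieModule.lowerCentralSeries ℝ (L ⧸ n) C k →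
      (c : L) ∈ LieModule.lowerCentralSeries ℝ L L k := by
    intro k
    induction k with
    | zero => exact fun c _ => LieSubmodule.mem_top _
    | succ k ih =>
      let D : LieSubmodule ℝ (L ⧸ n) C :=
        { carrier := {c : C | (c : L) ∈ LieModule.lowerCentralSeries ℝ L L (k + 1)}
          add_mem' := fun {a b} ha hb =>
            (LieModule.lowerCentralSeries ℝ L L (k + 1)).add_mem ha hb
          zero_mem' := (LieModule.lowerCentralSeries ℝ L L (k + 1)).zero_mem
          smul_mem' := fun t a ha =>
            (LieModule.lowerCentralSeries ℝ L L (k + 1)).smul_mem t ha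
          lie_mem := fun {q c} hc => by
            obtain ⟨y, rfl⟩ := hsurj q
            show ((⁅(LieSubmodule.Quotient.mk (N := n) y : L ⧸ n), c⁆ : C) : L) ∈
              LieModule.lowerCentralSeries ℝ L L (k + 1)
            rw [hbr]
            exact (LieModule.lowerCentralSeries ℝ L L (k + 1)).lie_mem hc }
      suffices h : LieModule.lowerCentralSeries ℝ (L ⧸ n) C (k + 1) ≤ D from
        fun c hc => h hc
      rw [LieModule.lowerCentralSeries_succ, LieSubmodule.lie_le_iff]
      intro q _ c hc
      obtain ⟨y, rfl⟩ := hsurj q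
      show ((⁅(LieSubmodule.Quotient.mk (N := n) y : L ⧸ n), c⁆ : C) : L) ∈
        LieModule.lowerCentralSeries ℝ L L (k + 1)
      rw [hbr]
      show ⁅y, (c : L)⁆ ∈ _
      rw [LieModule.lowerCentralSeries_succ]
      exact LieSubmodule.lie_mem_lie (LieSubmodule.mem_top y) (ih c hc)
  -- second bridge: nhat is contained in every term of the lcs of C
  have hB : ∀ k, nhat ≤ LieModule.lowerCentralSeries ℝ (L ⧸ n) C k := by
    intro k
    induction k with
    | zero => exact le_top
    | succ k ih =>
      intro c hc
      have hc' : (c : L) ∈ ⁅(⊤ : LieIdeal ℝ L), n⁆ := by rw [hlie]; exact hc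
      let T : Submodule ℝ L := Submodule.map (LieSubmodule.toSubmodule C).subtype
        (LieModule.lowerCentralSeries ℝ (L ⧸ n) C (k + 1) : Submodule ℝ C)
      have hspan : LieSubmodule.toSubmodule ⁅(⊤ : LieIdeal ℝ L), n⁆ ≤ T := by
        rw [LieSubmodule.lieIdeal_oper_eq_linear_span']
        apply Submodule.span_le.mpr
        rintro _ ⟨y, -, m, hm, rfl⟩
        refine ⟨⁅(LieSubmodule.Quotient.mk (N := n) y : L ⧸ n), (⟨m, hnC m hm⟩ : C)⁆, ?_, ?_⟩
        · show _ ∈ LieModule.lowerCentralSeries ℝ (L ⧸ n) C (k + 1)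
          rw [LieModule.lowerCentralSeries_succ]
          exact LieSubmodule.lie_mem_lie (LieSubmodule.mem_top _)
            (ih (show (⟨m, hnC m hm⟩ : C) ∈ nhat from hm))
        · rw [hbr]; rfl
      obtain ⟨c', hc'm, hcc⟩ := hspan hc'
      have : c' = c := Subtype.ext hcc
      rw [← this]
      exact hc'm
  -- Fitting decomposition over the nilpotent quotient
  haveI : IsNoetherian ℝ C := inferInstance
  haveI : IsArtinian ℝ C := inferInstance
  have hF : (⨅ k, LieModule.lowerCentralSeries ℝ (L ⧸ n) C k) = nhat := by
    refine le_antisymm ?_ (le_iInf hB)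
    intro c hc
    show (c : L) ∈ n
    rw [hn, LieSubmodule.mem_iInf]
    exact fun k => hA k c ((LieSubmodule.mem_iInf _).mp hc k)
  have hcompl := LieModule.isCompl_genWeightSpace_zero_posFittingComp ℝ (L ⧸ n) C
  rw [← LieModule.iInf_lowerCentralSeries_eq_posFittingComp, hF] at hcompl
  have hWne : LieModule.genWeightSpace C (0 : (L ⧸ n) → ℝ) ≠ ⊥ := by
    intro hbot
    have h2 := hcompl.codisjoint
    rw [codisjoint_iff, hbot, bot_sup_eq] at h2
    have h3 : (⟨x, hxC⟩ : C) ∈ nhat := h2.symm ▸ LieSubmodule.mem_top (⟨x, hxC⟩ : C)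
    exact hcon h3
  haveI : Nontrivial (LieModule.genWeightSpace C (0 : (L ⧸ n) → ℝ)) :=
    by rwa [LieSubmodule.nontrivial_iff_ne_bot]
  haveI := LieModule.nontrivial_max_triv_of_isNilpotent ℝ (L ⧸ n)
    (LieModule.genWeightSpace C (0 : (L ⧸ n) → ℝ))
  obtain ⟨t, ht0⟩ := exists_ne (0 : LieModule.maxTrivSubmodule ℝ (L ⧸ n)
    (LieModule.genWeightSpace C (0 : (L ⧸ n) → ℝ)))
  set c : C := ((t : LieModule.genWeightSpace C (0 : (L ⧸ n) → ℝ)) : C) with hc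
  have hc0 : (c : L) ≠ 0 := by
    intro h
    exact ht0 (Subtype.ext (Subtype.ext (Subtype.ext h)))
  have hcen : ∀ y : L, ⁅y, (c : L)⁆ = 0 := by
    intro y
    have h1 : ⁅(LieSubmodule.Quotient.mk (N := n) y : L ⧸ n),
        (t : LieModule.genWeightSpace C (0 : (L ⧸ n) → ℝ))⁆ = 0 :=
      (LieModule.mem_maxTrivSubmodule ℝ (L ⧸ n) _ _).mp t.2 _
    have h2 : ⁅(LieSubmodule.Quotient.mk (N := n) y : L ⧸ n), c⁆ = (0 : C) :=
      congrArg Subtype.val h1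
    have h3 : ⁅y, c⁆ = (0 : C) := by rw [← hbr]; exact h2
    exact congrArg Subtype.val h3
  have hmem : (c : L) ∈ LieAlgebra.center ℝ L :=
    (LieModule.mem_maxTrivSubmodule ℝ L L _).mpr hcen
  rw [hcenter, LieSubmodule.mem_bot] at hmem
  exact hc0 hmem

/-- If a finite-dimensional real Lie algebra `𝔤` has trivial centre and the ideal
`𝔤^∞ := ⋂_{j≥1} 𝔤^j` is abelian, then `𝔤^∞` is a maximal abelian subalgebra of `𝔤`:
every abelian subalgebra containing `𝔤^∞` equals `𝔤^∞`. -/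
theorem stmt3 (L : Type*) [LieRing L] [LieAlgebra ℝ L] [Module.Finite ℝ L]
    (hcenter : LieAlgebra.center ℝ L = ⊥)
    (habelian : ∀ x ∈ (⨅ k, LieModule.lowerCentralSeries ℝ L L k),
      ∀ y ∈ (⨅ k, LieModule.lowerCentralSeries ℝ L L k), ⁅x, y⁆ = 0)
    (a : LieSubalgebra ℝ L) (haAb : ∀ x ∈ a, ∀ y ∈ a, ⁅x, y⁆ = 0)
    (hsub : ∀ x, x ∈ (⨅ k, LieModule.lowerCentralSeries ℝ L L k) → x ∈ a) :
    ∀ x, x ∈ a ↔ x ∈ (⨅ k, LieModule.lowerCentralSeries ℝ L L k) := by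
  intro x
  refine ⟨fun hxa => ?_, hsub x⟩
  exact aux_central L hcenter habelian x (fun m hm => haAb x hxa m (hsub m hm))
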